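/- For d > q^2 + q + 1, the number of F_q-points of the curve C_F for a uniformly random homogeneous polynomial F of degree d over F_q has the same distribution as Y_1 + ... + Y_{q^2+q+1}, where the Y_i are i.i.d. Bernoulli random variables taking value 1 with probability 1/q and value 0 with probability (q-1)/q. That is, for every 0 ≤ t ≤ q^2+q+1, #{F in S_d : #C_F(F_q) = t} / #S_d = C(q^2+q+1, t) · (1/q)^t · ((q-1)/q)^{q^2+q+1-t}. -/

import Mathlib

open Finset Function

/-- Fibers of a surjective additive hom all have the same size. -/
lemma fiber_card_const {V W : Type*} [AddCommGroup V] [AddCommGroup W] [Fintype V]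
    [DecidableEq W] (f : V →+ W) (hf : Surjective f) (w : W) :
    (univ.filter fun v => f v = w).card = (univ.filter fun v => f v = 0).card := by
  obtain ⟨v0, hv0⟩ := hf w
  apply Finset.card_bij' (fun v _ => v - v0) (fun v _ => v + v0)
  · intro a ha
    simp only [mem_filter, mem_univ, true_and] at ha ⊢
    simp [map_sub, ha, hv0]
  · intro a ha
    simp only [mem_filter, mem_univ, true_and] at ha ⊢
    simp [map_add, ha, hv0]
  · intro a _; simp
  · intro a _; simp

lemma count_pred_comp {V W : Type*} [AddCommGroup V] [AddCommGroup W] [Fintype V] [Fintype W]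
    [DecidableEq W] (f : V →+ W) (hf : Surjective f) (p : W → Prop) [DecidablePred p] :
    (univ.filter fun v => p (f v)).card * Fintype.card W
      = (univ.filter p).card * Fintype.card V := by
  set k := (univ.filter fun v => f v = 0).card with hk
  have h1 : (univ.filter fun v => p (f v)).card = (univ.filter p).card * k := by
    rw [Finset.card_eq_sum_card_fiberwise (f := f) (t := univ.filter p)
      (fun {v} hv => by simp only [Finset.mem_coe, mem_filter, mem_univ, true_and] at hv ⊢; exact hv)]
    rw [Finset.sum_congr rfl (fun w hw => ?_), Finset.sum_const, smul_eq_mul]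
    have hpw : p w := by simpa using hw
    have : (univ.filter fun v => p (f v)).filter (fun v => f v = w)
        = univ.filter fun v => f v = w := by
      ext v
      simp only [mem_filter, mem_univ, true_and, and_iff_right_iff_imp]
      intro h; rw [h]; exact hpw
    rw [this, fiber_card_const f hf]
  have h2 : Fintype.card V = Fintype.card W * k := by
    have := Finset.card_eq_sum_card_fiberwise (s := (univ : Finset V)) (t := (univ : Finset W))
      (f := f) (fun v _ => mem_univ _)
    rw [← Finset.card_univ, this,
      Finset.sum_congr rfl (fun w _ => fiber_card_const f hf w),
      Finset.sum_const, smul_eq_mul, Finset.card_univ]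
  rw [h1, h2]; ring

/-- Counting functions whose value is `b` on exactly the set `s`. -/
lemma card_fun_zero_set_eq {α β : Type*} [Fintype α] [Fintype β] [DecidableEq α] [DecidableEq β]
    (b : β) (s : Finset α) :
    (univ.filter fun y : α → β => univ.filter (fun a => y a = b) = s).card
      = (Fintype.card β - 1) ^ (Fintype.card α - s.card) := by
  classical
  rw [← Fintype.card_subtype]
  have e1 : {y : α → β // univ.filter (fun a => y a = b) = s}
      ≃ {y : α → β // ∀ a, y a = b ↔ a ∈ s} :=
    Equiv.subtypeEquivRight (fun y => by
      rw [Finset.ext_iff]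
      exact forall_congr' fun a => by simp)
  have e2 : {y : α → β // ∀ a, y a = b ↔ a ∈ s} ≃ ({a : α // a ∉ s} → {x : β // x ≠ b}) := by
    refine
    { toFun := fun y a => ⟨y.1 a.1, fun h => a.2 ((y.2 a.1).mp h)⟩
      invFun := fun g => ⟨fun a => if h : a ∈ s then b else (g ⟨a, h⟩).1, fun a => ?_⟩
      left_inv := fun y => Subtype.ext (funext fun a => ?_)
      right_inv := fun g => funext fun a => Subtype.ext ?_ }
    · by_cases h : a ∈ s
      · simp [h]
      · simpa [h] using (g ⟨a, h⟩).2
    · by_cases h : a ∈ s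
      · simp [h, (y.2 a).mpr h]
      · simp [h]
    · simp [a.2]
  rw [Fintype.card_congr (e1.trans e2), Fintype.card_fun]
  congr 1
  · rw [Fintype.card_subtype_compl, Fintype.card_subtype_eq]
  · rw [Fintype.card_subtype_compl, Fintype.card_coe]

lemma card_fun_zero_count {α β : Type*} [Fintype α] [Fintype β] [DecidableEq α] [DecidableEq β]
    (b : β) (t : ℕ) :
    (univ.filter fun y : α → β => (univ.filter fun a => y a = b).card = t).card
      = (Fintype.card α).choose t * (Fintype.card β - 1) ^ (Fintype.card α - t) := by
  classical
  rw [Finset.card_eq_sum_card_fiberwise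
    (f := fun y : α → β => univ.filter (fun a => y a = b))
    (t := Finset.powersetCard t univ)
    (fun {y} hy => by
      simp only [Finset.mem_coe, mem_filter, mem_univ, true_and] at hy
      rw [Finset.mem_coe, Finset.mem_powersetCard]
      exact ⟨Finset.subset_univ _, hy⟩)]
  rw [Finset.sum_congr rfl (fun s hs => ?_), Finset.sum_const, smul_eq_mul,
    Finset.card_powersetCard, Finset.card_univ]
  rw [Finset.mem_powersetCard] at hs
  have : (univ.filter fun y : α → β => (univ.filter fun a => y a = b).card = t).filter
      (fun y => univ.filter (fun a => y a = b) = s)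
      = univ.filter fun y : α → β => univ.filter (fun a => y a = b) = s := by
    ext y
    simp only [mem_filter, mem_univ, true_and, and_iff_right_iff_imp]
    intro h; rw [h, hs.2]
  rw [this, card_fun_zero_set_eq, hs.2]

open Projectivization in
lemma card_proj_plane (F : Type*) [Field F] [Fintype F] [DecidableEq F]
    (q : ℕ) (hq : Fintype.card F = q)
    [Fintype (Projectivization F (Fin 3 → F))] :
    Fintype.card (Projectivization F (Fin 3 → F)) = q ^ 2 + q + 1 := by
  classical
  have hq2 : 2 ≤ q := hq ▸ Fintype.one_lt_card
  -- each fiber of mk' has q - 1 elements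
  have hfib : ∀ P : Projectivization F (Fin 3 → F),
      (univ.filter fun v : {v : Fin 3 → F // v ≠ 0} =>
        Projectivization.mk F v.1 v.2 = P).card = q - 1 := by
    intro P
    rw [← hq, ← Fintype.card_units, ← Finset.card_univ]
    apply (Finset.card_bij (fun (u : Fˣ) _ => (⟨(u : F) • P.rep,
      smul_ne_zero u.ne_zero P.rep_nonzero⟩ : {v : Fin 3 → F // v ≠ 0})) ?_ ?_ ?_).symm
    · intro u _
      simp only [mem_filter, mem_univ, true_and]
      conv_rhs => rw [← P.mk_rep]
      exact (mk_eq_mk_iff' F _ _ _ P.rep_nonzero).mpr ⟨(u : F), rfl⟩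
    · intro u _ u' _ h
      have := congrArg Subtype.val h
      exact Units.ext (smul_left_injective F P.rep_nonzero this)
    · intro v hv
      simp only [mem_filter, mem_univ, true_and] at hv
      rw [← P.mk_rep, mk_eq_mk_iff] at hv
      obtain ⟨a, ha⟩ := hv
      exact ⟨a, mem_univ _, Subtype.ext ha⟩
  have htot : Fintype.card {v : Fin 3 → F // v ≠ 0}
      = Fintype.card (Projectivization F (Fin 3 → F)) * (q - 1) := by
    rw [← Finset.card_univ, Finset.card_eq_sum_card_fiberwise
      (f := fun v : {v : Fin 3 → F // v ≠ 0} => Projectivization.mk F v.1 v.2)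
      (t := univ) (fun v _ => mem_univ _),
      Finset.sum_congr rfl (fun P _ => hfib P), Finset.sum_const, smul_eq_mul, Finset.card_univ]
  have hcard : Fintype.card {v : Fin 3 → F // v ≠ 0} = q ^ 3 - 1 := by
    rw [Fintype.card_subtype_compl, Fintype.card_subtype_eq, Fintype.card_fun, hq,
      Fintype.card_fin]
  rw [hcard] at htot
  have key : (q ^ 2 + q + 1) * (q - 1) = q ^ 3 - 1 := by
    obtain ⟨m, rfl⟩ : ∃ m, q = m + 1 := ⟨q - 1, by omega⟩
    have h3 : (m + 1) ^ 3 = (((m+1)^2 + (m+1) + 1)) * m + 1 := by ring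
    simp only [Nat.add_sub_cancel]
    omega
  have : Fintype.card (Projectivization F (Fin 3 → F)) * (q - 1)
      = (q ^ 2 + q + 1) * (q - 1) := by rw [key, htot]
  exact Nat.eq_of_mul_eq_mul_right (by omega) this

open MvPolynomial

section LinPoly
variable {F : Type*} [Field F]

/-- The degree-1 polynomial corresponding to a linear functional on `Fin 3 → F`. -/
noncomputable def linPoly (φ : (Fin 3 → F) →ₗ[F] F) : MvPolynomial (Fin 3) F :=
  ∑ i, C (φ fun j => if i = j then 1 else 0) * X i

lemma linPoly_isHomogeneous (φ : (Fin 3 → F) →ₗ[F] F) : (linPoly φ).IsHomogeneous 1 :=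
  IsHomogeneous.sum _ _ _ fun i _ => isHomogeneous_C_mul_X _ i

lemma eval_linPoly (φ : (Fin 3 → F) →ₗ[F] F) (v : Fin 3 → F) :
    eval v (linPoly φ) = φ v := by
  rw [LinearMap.pi_apply_eq_sum_univ φ v, linPoly, map_sum]
  exact Finset.sum_congr rfl fun i _ => by simp [mul_comm, smul_eq_mul]

open Projectivization in
lemma exists_sep_functional {F : Type*} [Field F] (P Q : Projectivization F (Fin 3 → F))
    (h : Q ≠ P) : ∃ φ : (Fin 3 → F) →ₗ[F] F, φ Q.rep = 0 ∧ φ P.rep ≠ 0 := by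
  have hx : P.rep ∉ Submodule.span F {Q.rep} := by
    intro hmem
    rw [Submodule.mem_span_singleton] at hmem
    obtain ⟨c, hc⟩ := hmem
    apply h
    have : Projectivization.mk F P.rep P.rep_nonzero = Projectivization.mk F Q.rep Q.rep_nonzero :=
      (mk_eq_mk_iff' F _ _ _ _).mpr ⟨c, hc⟩
    rw [P.mk_rep, Q.mk_rep] at this
    exact this.symm
  obtain ⟨f, hf1, hf2⟩ := Submodule.exists_dual_map_eq_bot_of_notMem hx inferInstance
  refine ⟨f, ?_, hf1⟩
  have : f Q.rep ∈ (Submodule.span F {Q.rep}).map f :=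
    Submodule.mem_map_of_mem (Submodule.mem_span_singleton_self _)
  rw [hf2] at this
  simpa using this

end LinPoly

open Projectivization in
lemma exists_sep_poly {F : Type*} [Field F] [Fintype F]
    [Fintype (Projectivization F (Fin 3 → F))] [DecidableEq (Projectivization F (Fin 3 → F))]
    (d : ℕ) (hd : Fintype.card (Projectivization F (Fin 3 → F)) ≤ d + 1)
    (P : Projectivization F (Fin 3 → F)) :
    ∃ G : MvPolynomial (Fin 3) F, G.IsHomogeneous d ∧ eval P.rep G ≠ 0 ∧
      ∀ R : Projectivization F (Fin 3 → F), R ≠ P → eval R.rep G = 0 := by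
  classical
  have hsep : ∀ Q : Projectivization F (Fin 3 → F),
      ∃ ψ : (Fin 3 → F) →ₗ[F] F, (Q ≠ P → ψ Q.rep = 0) ∧ ψ P.rep ≠ 0 := by
    intro Q
    obtain ⟨i, hi⟩ : ∃ i, P.rep i ≠ 0 := Function.ne_iff.mp P.rep_nonzero
    by_cases h : Q = P
    · exact ⟨LinearMap.proj i, fun hc => absurd h hc, hi⟩
    · obtain ⟨φ, h0, hP⟩ := exists_sep_functional P Q h
      exact ⟨φ, fun _ => h0, hP⟩
  choose ψ hψ0 hψP using hsep
  obtain ⟨i, hi⟩ : ∃ i, P.rep i ≠ 0 := Function.ne_iff.mp P.rep_nonzero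
  set e := d - (Finset.univ.erase P).card with he
  have hcard : (Finset.univ.erase P).card = Fintype.card (Projectivization F (Fin 3 → F)) - 1 := by
    rw [Finset.card_erase_of_mem (Finset.mem_univ _), Finset.card_univ]
  have hle : (Finset.univ.erase P).card ≤ d := by omega
  refine ⟨(∏ Q ∈ Finset.univ.erase P, linPoly (ψ Q)) * X i ^ e, ?_, ?_, ?_⟩
  · have h1 : (∏ Q ∈ Finset.univ.erase P, linPoly (ψ Q)).IsHomogeneous
        (Finset.univ.erase P).card := by
      have := IsHomogeneous.prod (Finset.univ.erase P) (fun Q => linPoly (ψ Q)) (fun _ => 1)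
        (fun Q _ => linPoly_isHomogeneous (ψ Q))
      simpa using this
    have := h1.mul (isHomogeneous_X_pow (R := F) i e)
    rwa [he, Nat.add_sub_cancel' hle] at this
  · rw [map_mul, map_pow, eval_X]
    apply mul_ne_zero
    · rw [map_prod]
      apply Finset.prod_ne_zero_iff.mpr
      intro Q _
      rw [eval_linPoly]
      exact hψP Q
    · exact pow_ne_zero _ hi
  · intro R hR
    rw [map_mul, map_prod]
    apply mul_eq_zero_of_left
    apply Finset.prod_eq_zero (Finset.mem_erase.mpr ⟨hR, Finset.mem_univ _⟩)
    rw [eval_linPoly]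
    exact hψ0 R hR

/-- For `d > q² + q + 1`, the number of `F_q`-points of the plane curve `C_F` for a
uniformly random homogeneous degree-`d` form `F` is binomially distributed:
for every `0 ≤ t ≤ q²+q+1`,
`#{F ∈ S_d : #C_F(F_q) = t} / #S_d = C(q²+q+1, t)·(1/q)^t·((q-1)/q)^{q²+q+1-t}`. -/
theorem point_count_distribution_all_curves (F : Type*) [Field F] [Fintype F]
    (q : ℕ) (hq : Fintype.card F = q)
    (d t : ℕ) (hd : q ^ 2 + q + 1 < d) (ht : t ≤ q ^ 2 + q + 1) :
    (Nat.card {G : MvPolynomial (Fin 3) F // G.IsHomogeneous d ∧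
        Nat.card {Pt : Projectivization F (Fin 3 → F) // eval Pt.rep G = 0} = t} : ℚ) /
      (Nat.card {G : MvPolynomial (Fin 3) F // G.IsHomogeneous d} : ℚ)
    = (Nat.choose (q ^ 2 + q + 1) t : ℚ) * (1 / q) ^ t *
        ((q - 1) / q) ^ (q ^ 2 + q + 1 - t) := by
  classical
  have hq2 : 2 ≤ q := hq ▸ Fintype.one_lt_card
  haveI : Finite (Projectivization F (Fin 3 → F)) :=
    (Quotient.finite _ : Finite (Quotient (projectivizationSetoid F (Fin 3 → F))))
  haveI : Fintype (Projectivization F (Fin 3 → F)) := Fintype.ofFinite _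
  have hN : Fintype.card (Projectivization F (Fin 3 → F)) = q ^ 2 + q + 1 :=
    card_proj_plane F q hq
  set M := homogeneousSubmodule (Fin 3) F d with hM
  haveI : Finite ↥(restrictTotalDegree (Fin 3) F d) := Module.finite_of_finite F
  have hle : M ≤ restrictTotalDegree (Fin 3) F d := fun G hG =>
    (mem_restrictTotalDegree _ _ _).mpr (IsHomogeneous.totalDegree_le hG)
  haveI : Finite ↥M :=
    Finite.of_injective (Submodule.inclusion hle) (Submodule.inclusion_injective hle)
  haveI : Fintype ↥M := Fintype.ofFinite _
  -- the evaluation map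
  set ev : ↥M →+ (Projectivization F (Fin 3 → F) → F) :=
    AddMonoidHom.mk' (fun G Pt => eval Pt.rep G.1)
      (fun a b => funext fun Pt => by simp [map_add]) with hev
  have hsurj : Function.Surjective ev := by
    intro y
    choose g hg1 hg2 hg3 using fun P : Projectivization F (Fin 3 → F) =>
      exists_sep_poly d (by omega) P
    refine ⟨⟨∑ P, C (y P * (eval P.rep (g P))⁻¹) * g P, ?_⟩, funext fun R => ?_⟩
    · exact IsHomogeneous.sum _ _ _ fun P _ => (hg1 P).C_mul _
    · show eval R.rep (∑ P, C (y P * (eval P.rep (g P))⁻¹) * g P) = y R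
      rw [map_sum, Finset.sum_eq_single R]
      · rw [map_mul, eval_C, mul_assoc, mul_comm ((eval R.rep (g R))⁻¹),
          mul_inv_cancel₀ (hg2 R), mul_one]
      · intro P _ hP
        rw [map_mul, hg3 P R (Ne.symm hP), mul_zero]
      · intro h; exact absurd (Finset.mem_univ R) h
  -- the predicate "exactly t zeros"
  have key := count_pred_comp ev hsurj
    (fun y => (Finset.univ.filter fun a => y a = 0).card = t)
  -- numerator
  have hnum : Nat.card {G : MvPolynomial (Fin 3) F // G.IsHomogeneous d ∧
      Nat.card {Pt : Projectivization F (Fin 3 → F) // eval Pt.rep G = 0} = t}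
      = (Finset.univ.filter fun v : ↥M =>
          (Finset.univ.filter fun a => ev v a = 0).card = t).card := by
    rw [← Fintype.card_subtype, ← Nat.card_eq_fintype_card]
    apply Nat.card_congr
    refine (Equiv.subtypeEquivRight fun G => ?_).trans
      ((Equiv.subtypeSubtypeEquivSubtypeInter (fun G : MvPolynomial (Fin 3) F => G ∈ M)
        (fun G => Nat.card {Pt : Projectivization F (Fin 3 → F) // eval Pt.rep G = 0} = t)).symm.trans
        (Equiv.subtypeEquivRight fun x => ?_))
    · exact Iff.rfl
    · show Nat.card {Pt : Projectivization F (Fin 3 → F) // eval Pt.rep x.1 = 0} = t ↔ _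
      rw [Nat.card_eq_fintype_card, Fintype.card_subtype]
      exact Iff.rfl
  -- denominator
  have hden : Nat.card {G : MvPolynomial (Fin 3) F // G.IsHomogeneous d}
      = Fintype.card ↥M := by
    rw [← Nat.card_eq_fintype_card]
    exact Nat.card_congr (Equiv.subtypeEquivRight fun G => Iff.rfl)
  have hW : Fintype.card (Projectivization F (Fin 3 → F) → F) = q ^ (q ^ 2 + q + 1) := by
    rw [Fintype.card_fun, hq, hN]
  have hpc : (Finset.univ.filter fun y : Projectivization F (Fin 3 → F) → F =>
      (Finset.univ.filter fun a => y a = 0).card = t).card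
      = (q ^ 2 + q + 1).choose t * (q - 1) ^ (q ^ 2 + q + 1 - t) := by
    have h := card_fun_zero_count (α := Projectivization F (Fin 3 → F)) (β := F) 0 t
    rw [hN, hq] at h
    exact h
  rw [hW, hpc] at key
  rw [hnum, hden]
  have hV0 : (Fintype.card ↥M : ℚ) ≠ 0 := by
    exact_mod_cast (Fintype.card_pos (α := ↥M)).ne'
  have hq0 : (q : ℚ) ≠ 0 := Nat.cast_ne_zero.mpr (Nat.one_le_iff_ne_zero.mp (le_trans one_le_two hq2))
  have hts : t + (q ^ 2 + q + 1 - t) = q ^ 2 + q + 1 := Nat.add_sub_cancel' ht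
  have hRHS : ((q ^ 2 + q + 1).choose t : ℚ) * (1 / q) ^ t *
        ((q - 1) / q) ^ (q ^ 2 + q + 1 - t)
      = (((q ^ 2 + q + 1).choose t * (q - 1) ^ (q ^ 2 + q + 1 - t) : ℕ) : ℚ)
          / (q : ℚ) ^ (q ^ 2 + q + 1) := by
    push_cast [Nat.cast_sub (le_trans one_le_two hq2)]
    rw [mul_assoc, div_pow, div_pow, one_pow, div_mul_div_comm, one_mul, ← pow_add, hts,
      mul_div_assoc]
  rw [hRHS, div_eq_div_iff hV0 (pow_ne_zero _ hq0)]
  exact_mod_cast key
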